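/- Let K be a field, A a 2×2 matrix over K, and σ₁ : M₂(K) → K a K-linear functional with σ₁(Id) = 0 and σ₁(A) ≠ 0. Then for every integer k ≥ 0, tr(Sym^k A) = σ₁(A^{k+1}) / σ₁(A). -/

import Mathlib

open MvPolynomial Finset

/-- The endomorphism induced by the matrix `A` on the space of homogeneous polynomials of
degree `k` in `n` variables (a model for the `k`-th symmetric power of `K^n`). -/
noncomputable def symPowMap {K : Type*} [Field K] {n : ℕ} (A : Matrix (Fin n) (Fin n) K) (k : ℕ) :
    homogeneousSubmodule (Fin n) K k →ₗ[K] homogeneousSubmodule (Fin n) K k :=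
  LinearMap.restrict
    (MvPolynomial.aeval fun i => ∑ j, A i j • X j :
      MvPolynomial (Fin n) K →ₐ[K] MvPolynomial (Fin n) K).toLinearMap
    (fun p hp => by
      rw [mem_homogeneousSubmodule] at hp ⊢
      have hg : ∀ i : Fin n, (∑ j, A i j • X j : MvPolynomial (Fin n) K).IsHomogeneous 1 := by
        intro i
        apply IsHomogeneous.sum
        intro j _
        rw [smul_eq_C_mul]
        exact (isHomogeneous_X K j).C_mul (A i j)
      have := hp.aeval (fun i => ∑ j, A i j • X j) hg
      simpa using this)

/-- `trSymPow A k = tr(Sym^k A)`, the trace of the `k`-th symmetric power of `A`. -/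
noncomputable def trSymPow {K : Type*} [Field K] {n : ℕ} (A : Matrix (Fin n) (Fin n) K)
    (k : ℕ) : K :=
  LinearMap.trace K _ (symPowMap A k)

/-- `tr(Sym^k A)` for an integer index, with the convention `tr(Sym^k A) = 0` for `k < 0`. -/
noncomputable def trSymPowZ {K : Type*} [Field K] {n : ℕ} (A : Matrix (Fin n) (Fin n) K)
    (k : ℤ) : K :=
  if 0 ≤ k then trSymPow A k.toNat else 0

/-! ### Auxiliary material: monomial basis for the homogeneous components in 2 variables -/

noncomputable section Aux

variable {K : Type*} [Field K]

def mono2 (i j : ℕ) : Fin 2 →₀ ℕ := Finsupp.single 0 i + Finsupp.single 1 j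

@[simp] lemma mono2_apply0 (i j : ℕ) : mono2 i j 0 = i := by
  simp [mono2, Finsupp.single_apply]

@[simp] lemma mono2_apply1 (i j : ℕ) : mono2 i j 1 = j := by
  simp [mono2, Finsupp.single_apply]

lemma degree_fin2 (d : Fin 2 →₀ ℕ) : d.degree = d 0 + d 1 := by
  rw [Finsupp.degree_apply, Finset.sum_subset (Finset.subset_univ _)
    (fun x _ hx => Finsupp.notMem_support_iff.mp hx), Fin.sum_univ_two]

lemma mono2_degree (i j : ℕ) : (mono2 i j).degree = i + j := by
  rw [degree_fin2]; simp

lemma eq_mono2 (d : Fin 2 →₀ ℕ) : d = mono2 (d 0) (d 1) := by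
  ext a
  fin_cases a <;> simp

lemma mono2_injective (i j i' j' : ℕ) (h : mono2 i j = mono2 i' j') : i = i' ∧ j = j' := by
  constructor
  · simpa using congrArg (fun f => f 0) h
  · simpa using congrArg (fun f => f 1) h

lemma monomial_mem (i j k : ℕ) (hij : i + j = k) (c : K) :
    monomial (mono2 i j) c ∈ homogeneousSubmodule (Fin 2) K k := by
  rw [mem_homogeneousSubmodule]
  exact isHomogeneous_monomial _ (by rw [mono2_degree]; exact hij)

lemma homog_decomp {k : ℕ} {p : MvPolynomial (Fin 2) K} (hp : p.IsHomogeneous k) :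
    p = ∑ i ∈ range (k + 1), monomial (mono2 i (k - i)) (coeff (mono2 i (k - i)) p) := by
  ext d
  rw [coeff_sum]
  by_cases hd : d.degree = k
  · have hsum : d 0 + d 1 = k := by rw [← degree_fin2]; exact hd
    have hdeq : d = mono2 (d 0) (k - d 0) := by
      nth_rewrite 1 [eq_mono2 d]
      congr 1
      omega
    rw [Finset.sum_eq_single (d 0)]
    · rw [coeff_monomial, if_pos hdeq.symm, ← hdeq]
    · intro i _ hne
      rw [coeff_monomial, if_neg]
      intro h
      exact hne ((mono2_injective _ _ _ _ (h.trans hdeq)).1)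
    · intro h
      exact absurd (mem_range.mpr (by omega)) h
  · rw [hp.coeff_eq_zero hd]
    symm
    apply Finset.sum_eq_zero
    intro i hi
    rw [coeff_monomial, if_neg]
    intro h
    apply hd
    rw [← h, mono2_degree]
    simp at hi
    omega

/-- The linear equivalence sending a homogeneous polynomial of degree `k` in two variables to
its list of coefficients. -/
def hEquiv (k : ℕ) :
    homogeneousSubmodule (Fin 2) K k ≃ₗ[K] (Fin (k + 1) → K) where
  toFun p i := coeff (mono2 i (k - i)) (p : MvPolynomial (Fin 2) K)
  map_add' p q := by funext i; simp
  map_smul' c p := by funext i; simp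
  invFun v := ⟨∑ i : Fin (k + 1), monomial (mono2 i (k - i)) (v i),
    Submodule.sum_mem _ (fun i _ => monomial_mem i (k - i) k (by omega) _)⟩
  left_inv p := by
    apply Subtype.ext
    dsimp only
    rw [Fin.sum_univ_eq_sum_range
      (fun i => monomial (mono2 i (k - i)) (coeff (mono2 i (k - i)) (p : MvPolynomial (Fin 2) K)))]
    exact (homog_decomp ((mem_homogeneousSubmodule _ _).mp p.2)).symm
  right_inv v := by
    funext i
    dsimp only
    rw [coeff_sum, Finset.sum_eq_single i]
    · rw [coeff_monomial, if_pos rfl]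
    · intro j _ hne
      rw [coeff_monomial, if_neg]
      intro h
      exact hne (Fin.ext (by exact (mono2_injective _ _ _ _ h).1))
    · intro h; exact absurd (Finset.mem_univ i) h

/-- The basis of monomials of the space of homogeneous polynomials of degree `k`
in two variables. -/
def hBasis (k : ℕ) : Module.Basis (Fin (k + 1)) K (homogeneousSubmodule (Fin 2) K k) :=
  Module.Basis.ofEquivFun (hEquiv k)

lemma hBasis_apply (k : ℕ) (i : Fin (k + 1)) :
    ((hBasis (K := K) k i : homogeneousSubmodule (Fin 2) K k) : MvPolynomial (Fin 2) K)
      = monomial (mono2 i (k - i)) 1 := by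
  rw [hBasis, Module.Basis.coe_ofEquivFun]
  show ((hEquiv (K := K) k).symm (Function.update 0 i 1) : MvPolynomial (Fin 2) K) = _
  show (∑ j : Fin (k + 1),
    monomial (mono2 j (k - j)) (Function.update (0 : Fin (k + 1) → K) i 1 j)) = _
  rw [Finset.sum_eq_single i]
  · rw [Function.update_self]
  · intro j _ hne; rw [Function.update_of_ne hne]; simp
  · intro h; exact absurd (Finset.mem_univ i) h

instance (k : ℕ) : Module.Finite K (homogeneousSubmodule (Fin 2) K k) :=
  Module.Finite.of_basis (hBasis k)

lemma finrank_h (k : ℕ) : Module.finrank K (homogeneousSubmodule (Fin 2) K k) = k + 1 := by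
  rw [Module.finrank_eq_card_basis (hBasis (K := K) k), Fintype.card_fin]

lemma trace_formula (k : ℕ)
    (f : homogeneousSubmodule (Fin 2) K k →ₗ[K] homogeneousSubmodule (Fin 2) K k) :
    LinearMap.trace K (homogeneousSubmodule (Fin 2) K k) f = ∑ i : Fin (k + 1),
      coeff (mono2 i (k - i)) ((f (hBasis k i) : MvPolynomial (Fin 2) K)) := by
  rw [LinearMap.trace_eq_matrix_trace K (hBasis k), Matrix.trace]
  congr 1
  funext i
  rw [Matrix.diag_apply, LinearMap.toMatrix_apply]
  rfl

/-! ### General trace lemmas -/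

open LinearMap

variable {M N P Q : Type*} [AddCommGroup M] [Module K M] [AddCommGroup N] [Module K N]
  [AddCommGroup P] [Module K P] [AddCommGroup Q] [Module K Q]
  [FiniteDimensional K M] [FiniteDimensional K N] [FiniteDimensional K P] [FiniteDimensional K Q]

lemma trace_prod_blocks (f : M × N →ₗ[K] M × N) :
    trace K (M × N) f = trace K M (fst K M N ∘ₗ f ∘ₗ inl K M N)
      + trace K N (snd K M N ∘ₗ f ∘ₗ inr K M N) := by
  have hf : f = (inl K M N ∘ₗ (fst K M N ∘ₗ f)) + (inr K M N ∘ₗ (snd K M N ∘ₗ f)) := by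
    ext x <;> simp
  calc trace K (M × N) f
      = trace K (M × N) (inl K M N ∘ₗ (fst K M N ∘ₗ f))
        + trace K (M × N) (inr K M N ∘ₗ (snd K M N ∘ₗ f)) := by
        rw [← map_add]; exact congrArg _ hf
    _ = trace K M ((fst K M N ∘ₗ f) ∘ₗ inl K M N) + trace K N ((snd K M N ∘ₗ f) ∘ₗ inr K M N) := by
        rw [LinearMap.trace_comp_comm' (fst K M N ∘ₗ f) (inl K M N),
          LinearMap.trace_comp_comm' (snd K M N ∘ₗ f) (inr K M N)]
    _ = _ := by rw [comp_assoc, comp_assoc]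

/-- Additivity of the trace in "short exact sequences" of endomorphisms. -/
lemma trace_ses (ι : P →ₗ[K] M) (π : M →ₗ[K] Q)
    (hι : Function.Injective ι) (hπ : Function.Surjective π)
    (hcomp : ∀ p, π (ι p) = 0)
    (hdim : Module.finrank K P + Module.finrank K Q = Module.finrank K M)
    (fP : P →ₗ[K] P) (fM : M →ₗ[K] M) (fQ : Q →ₗ[K] Q)
    (h1 : ∀ p, fM (ι p) = ι (fP p)) (h2 : ∀ m, π (fM m) = fQ (π m)) :
    trace K M fM = trace K P fP + trace K Q fQ := by
  obtain ⟨s, hs⟩ := π.exists_rightInverse_of_surjective (range_eq_top.mpr hπ)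
  have hs' : ∀ q, π (s q) = q := fun q => congrFun (congrArg (fun f => f.toFun) hs) q
  set e0 : P × Q →ₗ[K] M := ι.coprod s with he0
  have heval : ∀ x : P × Q, e0 x = ι x.1 + s x.2 := fun x => rfl
  have hπe : ∀ x : P × Q, π (e0 x) = x.2 := by
    intro x
    rw [heval, map_add, hcomp, hs', zero_add]
  have hinj : Function.Injective e0 := by
    rw [← ker_eq_bot, eq_bot_iff]
    rintro ⟨p, q⟩ hx
    have hx' : ι p + s q = 0 := hx
    have hq : q = 0 := by
      have h0 : π (ι p) + π (s q) = 0 := by rw [← map_add, hx', map_zero]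
      simpa [hcomp, hs'] using h0
    have hp : p = 0 := by
      apply hι
      rw [map_zero]
      rw [hq] at hx'
      simpa using hx'
    simp [hp, hq, Prod.ext_iff]
  have hbij : Function.Bijective e0 := by
    refine ⟨hinj, ?_⟩
    have hfr : Module.finrank K (P × Q) = Module.finrank K M := by
      rw [Module.finrank_prod, hdim]
    exact (LinearMap.injective_iff_surjective_of_finrank_eq_finrank hfr).mp hinj
  set e : (P × Q) ≃ₗ[K] M := LinearEquiv.ofBijective e0 hbij with he
  have heapp : ∀ x : P × Q, e x = ι x.1 + s x.2 := fun x => heval x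
  have hιe : ∀ p : P, e.symm (ι p) = (p, 0) := by
    intro p
    apply e.injective
    rw [e.apply_symm_apply, heapp]
    simp
  have hsnd : ∀ m : M, (e.symm m).2 = π m := by
    intro m
    conv_rhs => rw [← e.apply_symm_apply m]
    exact (hπe (e.symm m)).symm
  have htr : trace K (P × Q) (e.symm.conj fM) = trace K M fM := trace_conj' fM e.symm
  rw [← htr, trace_prod_blocks]
  congr 1
  · congr 1
    ext p
    show ((e.symm.conj fM) ((p, 0) : P × Q)).1 = fP p
    rw [LinearEquiv.conj_apply]
    simp only [coe_comp, Function.comp_apply, LinearEquiv.coe_coe, LinearEquiv.symm_symm]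
    rw [show e ((p, 0) : P × Q) = ι p from by rw [heapp]; simp, h1, hιe]
  · congr 1
    ext q
    show ((e.symm.conj fM) ((0, q) : P × Q)).2 = fQ q
    rw [LinearEquiv.conj_apply]
    simp only [coe_comp, Function.comp_apply, LinearEquiv.coe_coe, LinearEquiv.symm_symm]
    rw [show e ((0, q) : P × Q) = s q from by rw [heapp]; simp, hsnd, h2, hs']

/-! ### The symmetric power maps in two variables -/

lemma symPowMap_coe {n : ℕ} (A : Matrix (Fin n) (Fin n) K) (k : ℕ)
    (p : homogeneousSubmodule (Fin n) K k) :
    (symPowMap A k p : MvPolynomial (Fin n) K)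
      = aeval (fun i => ∑ j, A i j • X j) (p : MvPolynomial (Fin n) K) :=
  LinearMap.restrict_coe_apply _ _ _

/-- Multiplication by `X a` as a map between homogeneous components. -/
def mulXmap (a : Fin 2) (k : ℕ) :
    homogeneousSubmodule (Fin 2) K k →ₗ[K] homogeneousSubmodule (Fin 2) K (k + 1) :=
  LinearMap.codRestrict _ ((LinearMap.mulLeft K (X a)).comp (Submodule.subtype _))
    (fun p => by
      rw [mem_homogeneousSubmodule]
      have := (isHomogeneous_X K a).mul ((mem_homogeneousSubmodule _ _).mp p.2)
      rwa [Nat.add_comm 1 k] at this)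

@[simp] lemma mulXmap_coe (a : Fin 2) (k : ℕ) (p : homogeneousSubmodule (Fin 2) K k) :
    (mulXmap a k p : MvPolynomial (Fin 2) K) = X a * (p : MvPolynomial (Fin 2) K) := rfl

lemma X_mul_monomial' (a : Fin 2) (d : Fin 2 →₀ ℕ) (c : K) :
    X a * monomial d c = monomial (Finsupp.single a 1 + d) c := by
  rw [← pow_one (X a), X_pow_eq_monomial, monomial_mul, one_mul]

lemma trSymPow_formula (A : Matrix (Fin 2) (Fin 2) K) (k : ℕ) :
    trSymPow A k = ∑ i : Fin (k + 1), coeff (mono2 i (k - i))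
      (aeval (fun i => ∑ j, A i j • X j) (monomial (mono2 i (k - i)) (1 : K))) := by
  rw [trSymPow, trace_formula]
  congr 1
  funext i
  rw [symPowMap_coe, hBasis_apply]

lemma trSymPow_zero (A : Matrix (Fin 2) (Fin 2) K) : trSymPow A 0 = 1 := by
  rw [trSymPow_formula]
  have h0 : mono2 0 0 = (0 : Fin 2 →₀ ℕ) := by
    ext a; fin_cases a <;> simp
  simp [h0]

lemma trSymPow_one (A : Matrix (Fin 2) (Fin 2) K) : trSymPow A 1 = A.trace := by
  rw [trSymPow_formula, Fin.sum_univ_two, Matrix.trace_fin_two]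
  have h01 : mono2 0 1 = Finsupp.single 1 1 := by
    ext a; fin_cases a <;> simp
  have h10 : mono2 1 0 = Finsupp.single 0 1 := by
    ext a; fin_cases a <;> simp
  have hX : ∀ a : Fin 2, monomial (Finsupp.single a 1) (1 : K) = X a := by
    intro a; rw [← pow_one (X a), X_pow_eq_monomial]
  simp only [Fin.val_zero, Fin.val_one, Nat.sub_zero, Nat.sub_self, h01, h10, hX, aeval_X,
    Fin.sum_univ_two]
  rw [coeff_add, coeff_add, coeff_smul, coeff_smul, coeff_smul, coeff_smul,
    coeff_X', coeff_X', coeff_X', coeff_X']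
  rw [if_neg (by intro h; simpa using (Finsupp.single_left_injective one_ne_zero h)),
    if_pos rfl, if_pos rfl,
    if_neg (by intro h; simpa using (Finsupp.single_left_injective one_ne_zero h))]
  simp [add_comm]

/-! ### The short exact sequence and the recursion -/

variable (A : Matrix (Fin 2) (Fin 2) K)

def iotaMap (k : ℕ) : homogeneousSubmodule (Fin 2) K k →ₗ[K]
    (homogeneousSubmodule (Fin 2) K (k + 1)) × (homogeneousSubmodule (Fin 2) K (k + 1)) :=
  (mulXmap 1 k).prod
    (-(mulXmap 0 k : homogeneousSubmodule (Fin 2) K k →ₗ[K]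
      homogeneousSubmodule (Fin 2) K (k + 1)))

@[simp] lemma iotaMap_coe1 (k : ℕ) (p : homogeneousSubmodule (Fin 2) K k) :
    (((iotaMap k p).1 : homogeneousSubmodule (Fin 2) K (k + 1)) : MvPolynomial (Fin 2) K)
      = X 1 * (p : MvPolynomial (Fin 2) K) := rfl

@[simp] lemma iotaMap_coe2 (k : ℕ) (p : homogeneousSubmodule (Fin 2) K k) :
    (((iotaMap k p).2 : homogeneousSubmodule (Fin 2) K (k + 1)) : MvPolynomial (Fin 2) K)
      = -(X 0 * (p : MvPolynomial (Fin 2) K)) := by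
  show ((-(mulXmap 0 k p) : homogeneousSubmodule (Fin 2) K (k + 1)) :
    MvPolynomial (Fin 2) K) = _
  push_cast
  rw [mulXmap_coe]

def piMap (k : ℕ) : (homogeneousSubmodule (Fin 2) K (k + 1)) ×
    (homogeneousSubmodule (Fin 2) K (k + 1)) →ₗ[K] homogeneousSubmodule (Fin 2) K (k + 1 + 1) :=
  (mulXmap 0 (k + 1)).coprod (mulXmap 1 (k + 1))

@[simp] lemma piMap_coe (k : ℕ) (x : (homogeneousSubmodule (Fin 2) K (k + 1)) ×
    (homogeneousSubmodule (Fin 2) K (k + 1))) :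
    ((piMap k x : homogeneousSubmodule (Fin 2) K (k + 1 + 1)) : MvPolynomial (Fin 2) K)
      = X 0 * (x.1 : MvPolynomial (Fin 2) K) + X 1 * (x.2 : MvPolynomial (Fin 2) K) := by
  show ((mulXmap 0 (k + 1) x.1 + mulXmap 1 (k + 1) x.2 :
    homogeneousSubmodule (Fin 2) K (k + 1 + 1)) : MvPolynomial (Fin 2) K) = _
  rw [Submodule.coe_add, mulXmap_coe, mulXmap_coe]

def bMap (k : ℕ) : (homogeneousSubmodule (Fin 2) K (k + 1)) ×
    (homogeneousSubmodule (Fin 2) K (k + 1)) →ₗ[K] (homogeneousSubmodule (Fin 2) K (k + 1)) ×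
    (homogeneousSubmodule (Fin 2) K (k + 1)) :=
  ((A 0 0 • symPowMap A (k + 1)) ∘ₗ LinearMap.fst K _ _
      + (A 1 0 • symPowMap A (k + 1)) ∘ₗ LinearMap.snd K _ _).prod
    ((A 0 1 • symPowMap A (k + 1)) ∘ₗ LinearMap.fst K _ _
      + (A 1 1 • symPowMap A (k + 1)) ∘ₗ LinearMap.snd K _ _)

@[simp] lemma bMap_coe1 (k : ℕ) (x : (homogeneousSubmodule (Fin 2) K (k + 1)) ×
    (homogeneousSubmodule (Fin 2) K (k + 1))) :
    (((bMap A k x).1 : homogeneousSubmodule (Fin 2) K (k + 1)) : MvPolynomial (Fin 2) K)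
      = A 0 0 • (symPowMap A (k + 1) x.1 : MvPolynomial (Fin 2) K)
        + A 1 0 • (symPowMap A (k + 1) x.2 : MvPolynomial (Fin 2) K) := by
  show ((A 0 0 • symPowMap A (k + 1) x.1 + A 1 0 • symPowMap A (k + 1) x.2 :
    homogeneousSubmodule (Fin 2) K (k + 1)) : MvPolynomial (Fin 2) K) = _
  rw [Submodule.coe_add, SetLike.val_smul, SetLike.val_smul]

@[simp] lemma bMap_coe2 (k : ℕ) (x : (homogeneousSubmodule (Fin 2) K (k + 1)) ×
    (homogeneousSubmodule (Fin 2) K (k + 1))) :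
    (((bMap A k x).2 : homogeneousSubmodule (Fin 2) K (k + 1)) : MvPolynomial (Fin 2) K)
      = A 0 1 • (symPowMap A (k + 1) x.1 : MvPolynomial (Fin 2) K)
        + A 1 1 • (symPowMap A (k + 1) x.2 : MvPolynomial (Fin 2) K) := by
  show ((A 0 1 • symPowMap A (k + 1) x.1 + A 1 1 • symPowMap A (k + 1) x.2 :
    homogeneousSubmodule (Fin 2) K (k + 1)) : MvPolynomial (Fin 2) K) = _
  rw [Submodule.coe_add, SetLike.val_smul, SetLike.val_smul]

lemma aeval_X_two (a : Fin 2) :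
    aeval (R := K) (fun i => ∑ j, A i j • (X j : MvPolynomial (Fin 2) K)) (X a)
      = A a 0 • X 0 + A a 1 • X 1 := by
  rw [aeval_X, Fin.sum_univ_two]

set_option maxHeartbeats 1000000 in
lemma trSymPow_rec (k : ℕ) :
    trSymPow A (k + 2) = A.trace * trSymPow A (k + 1) - A.det * trSymPow A k := by
  classical
  -- injectivity of iotaMap
  have hinj : Function.Injective (iotaMap (K := K) k) := by
    intro p q h
    have h1 : X 1 * (p : MvPolynomial (Fin 2) K) = X 1 * (q : MvPolynomial (Fin 2) K) := by
      rw [← iotaMap_coe1 k p, ← iotaMap_coe1 k q, h]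
    exact Subtype.ext (mul_left_cancel₀ (X_ne_zero 1) h1)
  -- surjectivity of piMap
  have hmem : ∀ (i j : ℕ) (hij : i + j = k + 2) (c : K),
      (⟨monomial (mono2 i j) c, monomial_mem i j (k + 1 + 1) (by omega) c⟩ :
        homogeneousSubmodule (Fin 2) K (k + 1 + 1)) ∈ LinearMap.range (_root_.piMap k) := by
    intro i j hij c
    rcases Nat.eq_zero_or_pos i with h0 | hpos
    · refine ⟨(0, ⟨monomial (mono2 0 (j - 1)) c, monomial_mem _ _ _ (by omega) c⟩), ?_⟩
      apply Subtype.ext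
      rw [piMap_coe]
      rw [show ((((0 : homogeneousSubmodule (Fin 2) K (k + 1)),
        (⟨monomial (mono2 0 (j - 1)) c, monomial_mem _ _ _ (by omega) c⟩ :
          homogeneousSubmodule (Fin 2) K (k + 1))) :
        (homogeneousSubmodule (Fin 2) K (k + 1)) ×
          (homogeneousSubmodule (Fin 2) K (k + 1))).1 :
        MvPolynomial (Fin 2) K) = 0 from rfl]
      rw [mul_zero, zero_add]
      show X 1 * monomial (mono2 0 (j - 1)) c = _
      rw [X_mul_monomial']
      have hm : Finsupp.single (1 : Fin 2) 1 + mono2 0 (j - 1) = mono2 i j := by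
        ext a
        fin_cases a <;> simp [Finsupp.single_apply] <;> omega
      rw [hm]
    · refine ⟨(⟨monomial (mono2 (i - 1) j) c, monomial_mem _ _ _ (by omega) c⟩, 0), ?_⟩
      apply Subtype.ext
      rw [piMap_coe]
      rw [show ((((⟨monomial (mono2 (i - 1) j) c, monomial_mem _ _ _ (by omega) c⟩ :
          homogeneousSubmodule (Fin 2) K (k + 1)),
        (0 : homogeneousSubmodule (Fin 2) K (k + 1))) :
        (homogeneousSubmodule (Fin 2) K (k + 1)) ×
          (homogeneousSubmodule (Fin 2) K (k + 1))).2 :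
        MvPolynomial (Fin 2) K) = 0 from rfl]
      rw [mul_zero, add_zero]
      show X 0 * monomial (mono2 (i - 1) j) c = _
      rw [X_mul_monomial']
      have hm : Finsupp.single (0 : Fin 2) 1 + mono2 (i - 1) j = mono2 i j := by
        ext a
        fin_cases a <;> simp [Finsupp.single_apply] <;> omega
      rw [hm]
  have hsurj : Function.Surjective (piMap (K := K) k) := by
    rw [← LinearMap.range_eq_top, eq_top_iff]
    rintro x -
    have hx := homog_decomp ((mem_homogeneousSubmodule _ _).mp x.2)
    set S := (LinearMap.range (piMap (K := K) k)).map
      (homogeneousSubmodule (Fin 2) K (k + 1 + 1)).subtype with hSdef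
    have hS : ∀ (i j : ℕ) (hij : i + j = k + 2) (c : K), monomial (mono2 i j) c ∈ S :=
      fun i j hij c => ⟨_, hmem i j hij c, rfl⟩
    have hxS : (x : MvPolynomial (Fin 2) K) ∈ S := by
      rw [hx]
      exact Submodule.sum_mem _ (fun i hi =>
        hS i (k + 2 - i) (by simp at hi; omega) _)
    obtain ⟨y, hy, hyx⟩ := hxS
    have : y = x := Subtype.ext hyx
    rw [← this]
    exact hy
  -- the composition is zero
  have hcomp : ∀ p, piMap k (iotaMap (K := K) k p) = 0 := by
    intro p
    apply Subtype.ext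
    rw [piMap_coe, iotaMap_coe1, iotaMap_coe2, Submodule.coe_zero]
    ring
  -- dimensions
  have hdim : Module.finrank K (homogeneousSubmodule (Fin 2) K k)
      + Module.finrank K (homogeneousSubmodule (Fin 2) K (k + 1 + 1))
      = Module.finrank K ((homogeneousSubmodule (Fin 2) K (k + 1)) ×
        (homogeneousSubmodule (Fin 2) K (k + 1))) := by
    rw [Module.finrank_prod, finrank_h, finrank_h, finrank_h]
    omega
  -- intertwining with iotaMap
  have h1 : ∀ p, bMap A k (iotaMap k p) = iotaMap k ((A.det • symPowMap A k) p) := by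
    intro p
    refine Prod.ext (Subtype.ext ?_) (Subtype.ext ?_) <;>
      · simp only [bMap_coe1, bMap_coe2, symPowMap_coe, iotaMap_coe1, iotaMap_coe2,
          LinearMap.smul_apply, SetLike.val_smul, map_mul, map_neg, aeval_X_two,
          Matrix.det_fin_two, smul_neg, mul_neg]
        simp only [smul_eq_C_mul, map_sub, map_mul, map_add]
        ring
  -- intertwining with piMap
  have h2 : ∀ m, piMap k (bMap A k m) = symPowMap A (k + 2) (piMap k m) := by
    intro m
    apply Subtype.ext
    simp only [piMap_coe, bMap_coe1, bMap_coe2, symPowMap_coe, map_add, map_mul,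
      aeval_X_two]
    simp only [smul_eq_C_mul, map_sub, map_mul, map_add]
    ring
  have key := trace_ses (iotaMap (K := K) k) (piMap (K := K) k) hinj hsurj hcomp hdim
    (A.det • symPowMap A k) (bMap A k) (symPowMap A (k + 2)) h1 h2
  -- compute the traces
  have hblock : LinearMap.trace K _ (bMap A k) = A.trace * trSymPow A (k + 1) := by
    rw [trace_prod_blocks]
    have hb1 : LinearMap.fst K _ _ ∘ₗ bMap A k ∘ₗ LinearMap.inl K _ _
        = A 0 0 • symPowMap A (k + 1) := by
      apply LinearMap.ext
      intro p
      apply Subtype.ext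
      rw [LinearMap.smul_apply, SetLike.val_smul]
      show (((bMap A k ((p, 0) : (homogeneousSubmodule (Fin 2) K (k + 1)) ×
        (homogeneousSubmodule (Fin 2) K (k + 1)))).1 :
          homogeneousSubmodule (Fin 2) K (k + 1)) : MvPolynomial (Fin 2) K) = _
      rw [bMap_coe1]
      simp
    have hb2 : LinearMap.snd K _ _ ∘ₗ bMap A k ∘ₗ LinearMap.inr K _ _
        = A 1 1 • symPowMap A (k + 1) := by
      apply LinearMap.ext
      intro q
      apply Subtype.ext
      rw [LinearMap.smul_apply, SetLike.val_smul]
      show (((bMap A k ((0, q) : (homogeneousSubmodule (Fin 2) K (k + 1)) ×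
        (homogeneousSubmodule (Fin 2) K (k + 1)))).2 :
          homogeneousSubmodule (Fin 2) K (k + 1)) : MvPolynomial (Fin 2) K) = _
      rw [bMap_coe2]
      simp
    rw [hb1, hb2, map_smul, map_smul, smul_eq_mul, smul_eq_mul, Matrix.trace_fin_two]
    show A 0 0 * trSymPow A (k + 1) + A 1 1 * trSymPow A (k + 1) = _
    ring
  have hfPtr : LinearMap.trace K _ (A.det • symPowMap A k) = A.det * trSymPow A k := by
    rw [map_smul, smul_eq_mul]
    rfl
  rw [hblock, hfPtr] at key
  have hfQtr : LinearMap.trace K _ (symPowMap A (k + 2)) = trSymPow A (k + 2) := rfl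
  rw [hfQtr] at key
  linear_combination -key

/-! ### Cayley–Hamilton for 2×2 matrices -/

lemma cayley_hamilton_two (A : Matrix (Fin 2) (Fin 2) K) :
    A ^ 2 = A.trace • A - A.det • (1 : Matrix (Fin 2) (Fin 2) K) := by
  ext i j
  fin_cases i <;> fin_cases j <;>
    simp [pow_two, Matrix.mul_apply, Fin.sum_univ_two, Matrix.trace_fin_two,
      Matrix.det_fin_two, Matrix.one_apply] <;> ring

end Aux

theorem sym_trace_eq_sigma_one_div_two_by_two
    (K : Type*) [Field K] (A : Matrix (Fin 2) (Fin 2) K)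
    (σ₁ : Matrix (Fin 2) (Fin 2) K →ₗ[K] K) (hId : σ₁ 1 = 0) (hA : σ₁ A ≠ 0) :
    ∀ k : ℕ, trSymPow A k = σ₁ (A ^ (k + 1)) / σ₁ A := by
  have hpow : ∀ n : ℕ, A ^ (n + 2) = A.trace • A ^ (n + 1) - A.det • A ^ n := by
    intro n
    calc A ^ (n + 2) = A ^ 2 * A ^ n := by rw [show n + 2 = 2 + n from by omega, pow_add]
      _ = (A.trace • A - A.det • (1 : Matrix (Fin 2) (Fin 2) K)) * A ^ n := by
            rw [cayley_hamilton_two]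
      _ = A.trace • A ^ (n + 1) - A.det • A ^ n := by
            rw [sub_mul, smul_mul_assoc, smul_mul_assoc, one_mul, pow_succ']
  have key : ∀ k : ℕ, trSymPow A k * σ₁ A = σ₁ (A ^ (k + 1))
      ∧ trSymPow A (k + 1) * σ₁ A = σ₁ (A ^ (k + 2)) := by
    intro k
    induction k with
    | zero =>
      constructor
      · rw [trSymPow_zero, one_mul, pow_one]
      · rw [trSymPow_one]
        rw [hpow 0, map_sub, map_smul, map_smul, pow_one, pow_zero, hId, smul_eq_mul,
          smul_eq_mul, mul_zero, sub_zero]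
    | succ n ih =>
      refine ⟨ih.2, ?_⟩
      show trSymPow A (n + 2) * σ₁ A = σ₁ (A ^ (n + 3))
      rw [trSymPow_rec, show (n + 3) = (n + 1) + 2 from rfl, hpow (n + 1), map_sub, map_smul, map_smul, smul_eq_mul, smul_eq_mul,
        ← ih.1, ← ih.2]
      ring
  intro k
  rw [eq_div_iff hA]
  exact (key k).1
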